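/- For every vertex i ∈ Q₀ and every arrow α starting at i (s(α) = i), the element z_i := x(α)·x(f(α))·x(f²(α)) satisfies z_i·x(β) = 0 and x(β)·z_i = 0 in A for every arrow β ∈ Q₁. -/
import Mathlib


/-- The product `x α * x (g α) * ⋯ * x (g^[m-1] α)` of `m` factors along the `g`-orbit,
read left to right (the empty product for `m = 0` is `1`). -/
def gpath {Q₁ A : Type} [Ring A] (x : Q₁ → A) (g : Q₁ → Q₁) (α : Q₁) (m : ℕ) : A :=
  ((List.range m).map fun i => x (g^[i] α)).prod

private lemma gpath_succ {Q₁ A : Type} [Ring A] (x : Q₁ → A) (g : Q₁ → Q₁) (δ : Q₁) (m : ℕ) :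
    gpath x g δ (m+1) = gpath x g δ m * x (g^[m] δ) := by
  simp [gpath, List.range_succ]

private lemma gpath_cons {Q₁ A : Type} [Ring A] (x : Q₁ → A) (g : Q₁ → Q₁) (δ : Q₁) (m : ℕ) :
    gpath x g δ (m+1) = x δ * gpath x g (g δ) m := by
  simp [gpath, List.range_succ_eq_map, List.map_map, Function.comp_def,
    Function.iterate_succ_apply]

private lemma eq_or_eq_of_card_two {Q₁ : Type} [Fintype Q₁] [DecidableEq Q₁]
    {p : Q₁ → Prop} [DecidablePred p]
    (h : (Finset.univ.filter p).card = 2) {a b ε : Q₁} (hab : a ≠ b)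
    (ha : p a) (hb : p b) (he : p ε) : ε = a ∨ ε = b := by
  have hsub : ({a, b} : Finset Q₁) ⊆ Finset.univ.filter p := by
    intro y hy
    simp only [Finset.mem_insert, Finset.mem_singleton] at hy
    rcases hy with rfl | rfl <;> simp [ha, hb]
  have heq := Finset.eq_of_subset_of_card_le hsub (by rw [h, Finset.card_pair hab])
  have : ε ∈ ({a, b} : Finset Q₁) := by rw [heq]; simp [he]
  simpa using this
theorem stmt_17
  {Q₀ Q₁ : Type} [Fintype Q₀] [Fintype Q₁] [DecidableEq Q₀] [DecidableEq Q₁]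
  [Nonempty Q₀] [Nonempty Q₁]
  (s t : Q₁ → Q₀)
  (hconn : ∀ u v : Q₀, Relation.EqvGen (fun a b => ∃ e : Q₁, s e = a ∧ t e = b) u v)
  (hnoloop : ∀ e : Q₁, s e ≠ t e)
  (hno2cyc : ∀ e e' : Q₁, ¬ (s e = t e' ∧ t e = s e'))
  (hout : ∀ v : Q₀, (Finset.univ.filter fun e => s e = v).card = 2)
  (hin : ∀ v : Q₀, (Finset.univ.filter fun e => t e = v).card = 2)
  (f g : Q₁ ≃ Q₁)
  (hfg : ∀ α : Q₁, f α ≠ g α)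
  (hsf : ∀ α : Q₁, s (f α) = t α)
  (hsg : ∀ α : Q₁, s (g α) = t α)
  (hf3 : ∀ α : Q₁, f (f (f α)) = α)
  (bar : Q₁ → Q₁)
  (hbar_ne : ∀ α : Q₁, bar α ≠ α)
  (hbar_s : ∀ α : Q₁, s (bar α) = s α)
  {K : Type} [Field K] {A : Type} [Ring A] [Algebra K A]
  (c : Q₁ → K) (hc0 : ∀ α : Q₁, c α ≠ 0) (hcg : ∀ α : Q₁, c (g α) = c α)
  (x : Q₁ → A)
  (hrel : ∀ α : Q₁, x (f α) * x (f (f α)) =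
      c α • gpath x (⇑g) (g α) (Function.minimalPeriod (⇑g) α - 1))
  (e : Q₀ → A)
  (hidem : ∀ v : Q₀, e v * e v = e v)
  (horth : ∀ v w : Q₀, v ≠ w → e v * e w = 0)
  (hsum : ∑ v : Q₀, e v = 1)
  (hes : ∀ α : Q₁, e (s α) * x α = x α)
  (het : ∀ α : Q₁, x α * e (t α) = x α)
  (hvan : ∀ β : Q₁, x β * x (g β) * x (f (g β)) = 0 ∧ x β * x (f β) * x (g (f β)) = 0) :
    ∀ i : Q₀, ∀ α : Q₁, s α = i → ∀ β : Q₁,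
      (x α * x (f α) * x (f (f α))) * x β = 0 ∧
      x β * (x α * x (f α) * x (f (f α))) = 0 := by
  intro i α hsi β
  have hper : ∀ δ : Q₁, 0 < Function.minimalPeriod (⇑g) δ := by
    intro δ
    refine Function.IsPeriodicPt.minimalPeriod_pos (orderOf_pos g) ?_
    show (⇑g)^[orderOf g] δ = δ
    rw [Equiv.Perm.iterate_eq_pow, pow_orderOf_eq_one]
    rfl
  have hge2 : ∀ δ : Q₁, 2 ≤ Function.minimalPeriod (⇑g) δ := by
    intro δ
    have h1 := hper δ
    have h2 : Function.minimalPeriod (⇑g) δ ≠ 1 := by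
      intro h
      have hfix : g δ = δ := Function.minimalPeriod_eq_one_iff_isFixedPt.mp h
      exact hnoloop δ (by rw [← hsg δ, hfix])
    omega
  have hf2 : f (f (f α)) = α := hf3 α
  obtain ⟨k, hk⟩ : ∃ k, Function.minimalPeriod (⇑g) α = k + 1 + 1 :=
    ⟨Function.minimalPeriod (⇑g) α - 2, by have := hge2 α; omega⟩
  obtain ⟨l, hl⟩ : ∃ l, Function.minimalPeriod (⇑g) (f (f α)) = l + 1 + 1 :=
    ⟨Function.minimalPeriod (⇑g) (f (f α)) - 2, by have := hge2 (f (f α)); omega⟩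
  have hgn : (⇑g)^[k+1+1] α = α := by rw [← hk]; exact Function.iterate_minimalPeriod
  have hgm : (⇑g)^[l+1+1] (f (f α)) = f (f α) := by
    rw [← hl]; exact Function.iterate_minimalPeriod
  have ht2 : t (f (f α)) = i := by rw [← hsf (f (f α)), hf2]; exact hsi
  -- z in α-form
  have hz1 : x α * x (f α) * x (f (f α)) = c α • gpath x (⇑g) α (k+1+1) := by
    rw [mul_assoc, hrel α, mul_smul_comm, hk, Nat.add_sub_cancel,
      gpath_cons x (⇑g) α (k+1)]
  -- z in f²α-form
  have hz2 : x α * x (f α) * x (f (f α)) =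
      c (f (f α)) • gpath x (⇑g) (g (f (f α))) (l+1+1) := by
    have h1 := hrel (f (f α))
    rw [hf2, hl, Nat.add_sub_cancel] at h1
    rw [h1, smul_mul_assoc]
    congr 1
    rw [gpath_succ x (⇑g) (g (f (f α))) (l+1)]
    congr 2
    rw [← Function.iterate_succ_apply]
    exact hgm.symm
  -- the two arrows going out of i
  have hs_b2 : s (g (f (f α))) = i := by rw [hsg]; exact ht2
  have hab : α ≠ g (f (f α)) := fun h => hfg (f (f α)) (by rw [hf2, ← h])
  have hout_pair : ∀ ε : Q₁, s ε = i → ε = α ∨ ε = g (f (f α)) :=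
    fun ε hε => eq_or_eq_of_card_two (hout i) hab hsi hs_b2 hε
  -- the two arrows coming in to i
  have hgk : g ((⇑g)^[k+1] α) = α := by
    rw [← Function.iterate_succ_apply' (⇑g) (k+1) α]; exact hgn
  have ht_a2 : t ((⇑g)^[k+1] α) = i := by rw [← hsg, hgk]; exact hsi
  have hab' : f (f α) ≠ (⇑g)^[k+1] α := by
    intro h
    apply hfg ((⇑g)^[k+1] α)
    rw [← h, hf2, h]
    exact hgk.symm
  have hin_pair : ∀ ε : Q₁, t ε = i → ε = f (f α) ∨ ε = (⇑g)^[k+1] α :=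
    fun ε hε => eq_or_eq_of_card_two (hin i) hab' ht2 ht_a2 hε
  -- identification: f (g^[k+1] α) = g (f (f α))
  have hb2 : f ((⇑g)^[k+1] α) = g (f (f α)) := by
    have h1 : s (f ((⇑g)^[k+1] α)) = i := by rw [hsf]; exact ht_a2
    rcases hout_pair _ h1 with h | h
    · exact absurd (h.trans hgk.symm) (hfg ((⇑g)^[k+1] α))
    · exact h
  constructor
  · -- z * x β = 0
    by_cases hβ : s β = i
    · rcases hout_pair β hβ with h | h <;> rw [h]
      · -- β = α : use f²α-form
        rw [hz2, smul_mul_assoc]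
        suffices hG : gpath x (⇑g) (g (f (f α))) (l+1+1) * x α = 0 by rw [hG, smul_zero]
        rw [gpath_succ x (⇑g) _ (l+1), gpath_succ x (⇑g) _ l]
        have e1 : (⇑g)^[l+1] (g (f (f α))) = f (f α) := by
          rw [← Function.iterate_succ_apply]; exact hgm
        have e2 : g ((⇑g)^[l] (g (f (f α)))) = f (f α) := by
          rw [← Function.iterate_succ_apply' (⇑g) l (g (f (f α)))]; exact e1
        have key := (hvan ((⇑g)^[l] (g (f (f α))))).1
        rw [e2, hf2] at key
        rw [e1]
        simp only [mul_assoc] at key ⊢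
        rw [key, mul_zero]
      · -- β = g (f²α) : use α-form
        rw [hz1, smul_mul_assoc]
        suffices hG : gpath x (⇑g) α (k+1+1) * x (g (f (f α))) = 0 by rw [hG, smul_zero]
        rw [gpath_succ x (⇑g) α (k+1), gpath_succ x (⇑g) α k]
        have e1 : g ((⇑g)^[k] α) = (⇑g)^[k+1] α := (Function.iterate_succ_apply' _ _ _).symm
        have key := (hvan ((⇑g)^[k] α)).1
        rw [e1, hb2] at key
        simp only [mul_assoc] at key ⊢
        rw [key, mul_zero]
    · rw [← hes β, ← het (f (f α)), ht2]
      simp only [mul_assoc]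
      rw [← mul_assoc (e i), horth i (s β) (fun h => hβ h.symm), zero_mul]
      simp only [mul_zero]
  · -- x β * z = 0
    by_cases hβ : t β = i
    · rcases hin_pair β hβ with h | h <;> rw [h]
      · -- β = f²α
        rw [hz1, mul_smul_comm]
        suffices hG : x (f (f α)) * gpath x (⇑g) α (k+1+1) = 0 by rw [hG, smul_zero]
        rw [gpath_cons x (⇑g) α (k+1), gpath_cons x (⇑g) (g α) k]
        have key := (hvan (f (f α))).2
        rw [hf2] at key
        simp only [← mul_assoc]
        rw [key, zero_mul]
      · -- β = g^[k+1] α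
        have key := (hvan ((⇑g)^[k+1] α)).1
        rw [hgk] at key
        simp only [← mul_assoc]
        rw [key, zero_mul]
    · rw [← het β, ← hes α, hsi]
      simp only [mul_assoc]
      rw [← mul_assoc (e (t β)), horth (t β) i hβ, zero_mul, mul_zero]
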